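/- arXiv:1902.05878 — 2 statements merged into one kernel-verified Lean document; each statement's English description precedes it below -/
import Mathlib

section
/- Let $(\eta_k)_{k\ge 0}$ be a sequence of real numbers with $0<\eta_k\le 1$ for all $k$, and suppose there exist constants $0<\gamma<1$, $b>0$, $c\ge 1$ such that $\eta_{k+1}\le c(\eta_k+b)^\gamma$ for all $k$. Then $\eta_k\le C(\eta_0+b)^{\gamma^k}$ for all $k$, where $C=(2c)^{1/(1-\gamma)}$. -/
/-- Iteration lemma: a sequence in `(0,1]` satisfying the recursive power-type
inequality `η (k+1) ≤ c (η k + b)^γ` satisfies `η k ≤ (2c)^(1/(1-γ)) (η 0 + b)^(γ^k)`. -/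
theorem stmt0 (η : ℕ → ℝ) (γ b c : ℝ) (hγ0 : 0 < γ) (hγ1 : γ < 1) (hb : 0 < b)
    (hc : 1 ≤ c) (hηpos : ∀ k, 0 < η k) (hηle : ∀ k, η k ≤ 1)
    (hrec : ∀ k : ℕ, η (k + 1) ≤ c * (η k + b) ^ γ) :
    ∀ k : ℕ, η k ≤ (2 * c) ^ (1 / (1 - γ)) * (η 0 + b) ^ (γ ^ k) := by
  have h1γ : 0 < 1 - γ := by linarith
  have h2c : (1:ℝ) ≤ 2 * c := by linarith
  have h2c0 : (0:ℝ) < 2 * c := by linarith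
  set C := (2 * c) ^ (1 / (1 - γ)) with hCdef
  have hexp : 0 ≤ 1 / (1 - γ) := by positivity
  have hC1 : 1 ≤ C := by
    calc (1:ℝ) = (1:ℝ) ^ (1 / (1 - γ)) := (Real.one_rpow _).symm
    _ ≤ C := Real.rpow_le_rpow (by norm_num) h2c hexp
  have hx0 : 0 < η 0 + b := by linarith [hηpos 0]
  rcases le_or_gt 1 (η 0 + b) with hx1 | hx1
  · intro k
    have h1 : 1 ≤ (η 0 + b) ^ (γ ^ k) := by
      calc (1:ℝ) = (1:ℝ) ^ (γ ^ k) := (Real.one_rpow _).symm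
      _ ≤ _ := Real.rpow_le_rpow zero_le_one hx1 (by positivity)
    nlinarith [hηle k, hC1]
  · -- key numeric inequality
    have h2γ : (2:ℝ) ^ γ ≤ 2 := by
      calc (2:ℝ) ^ γ ≤ (2:ℝ) ^ (1:ℝ) :=
        Real.rpow_le_rpow_of_exponent_le (by norm_num) hγ1.le
      _ = 2 := Real.rpow_one 2
    have hCγ : C ^ γ = (2 * c) ^ (1 / (1 - γ) * γ) := by
      rw [hCdef, ← Real.rpow_mul h2c0.le]
    have hCγpos : 0 < C ^ γ := by positivity
    have key : c * 2 ^ γ * C ^ γ ≤ C := by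
      have hc2 : c * 2 ^ γ ≤ 2 * c := by nlinarith
      have h1 : c * 2 ^ γ * C ^ γ ≤ (2 * c) * C ^ γ :=
        mul_le_mul_of_nonneg_right hc2 hCγpos.le
      have h2 : (2 * c) * C ^ γ = (2 * c) ^ (1 + 1 / (1 - γ) * γ) := by
        rw [Real.rpow_add h2c0, Real.rpow_one, hCγ]
      have h3 : 1 + 1 / (1 - γ) * γ = 1 / (1 - γ) := by
        field_simp
        ring
      rw [h2, h3] at h1
      exact h1
    intro k
    induction k with
    | zero =>
      simp only [pow_zero, Real.rpow_one]
      nlinarith [hηpos 0, hC1, hx0]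
    | succ k ih =>
      have hgk1 : γ ^ k ≤ 1 := pow_le_one₀ hγ0.le hγ1.le
      have hbx : b ≤ (η 0 + b) ^ (γ ^ k) := by
        calc b ≤ η 0 + b := by linarith [hηpos 0]
        _ = (η 0 + b) ^ (1:ℝ) := (Real.rpow_one _).symm
        _ ≤ _ := Real.rpow_le_rpow_of_exponent_ge hx0 hx1.le hgk1
      have hpos : 0 < (η 0 + b) ^ (γ ^ k) := Real.rpow_pos_of_pos hx0 _
      have h1 : η k + b ≤ 2 * C * (η 0 + b) ^ (γ ^ k) := by nlinarith [ih, hbx, hC1, hpos]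
      have hkb : 0 ≤ η k + b := by linarith [hηpos k]
      calc η (k + 1) ≤ c * (η k + b) ^ γ := hrec k
      _ ≤ c * (2 * C * (η 0 + b) ^ (γ ^ k)) ^ γ := by
          apply mul_le_mul_of_nonneg_left _ (by linarith)
          exact Real.rpow_le_rpow hkb h1 hγ0.le
      _ = c * (2 ^ γ * C ^ γ * ((η 0 + b) ^ (γ ^ k)) ^ γ) := by
          rw [Real.mul_rpow (by positivity) hpos.le, Real.mul_rpow (by norm_num) (by positivity)]
      _ = (c * 2 ^ γ * C ^ γ) * (η 0 + b) ^ (γ ^ (k + 1)) := by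
          rw [← Real.rpow_mul hx0.le, ← pow_succ]; ring
      _ ≤ C * (η 0 + b) ^ (γ ^ (k + 1)) := by
          apply mul_le_mul_of_nonneg_right key (by positivity)
end

section
/- Let $\Omega\subset\mathbb{R}^n$ be bounded with Lipschitz boundary, $x_0\in\overline{\Omega}$, $m(x)=x-x_0$, and let $u\in H^1(\Omega)$ vanish on $\partial\Omega$ (for a.e. fixed time $t$). Then the multiplier $w=2(m\cdot\nabla u)+(n-1)u$ satisfies $\|w(\cdot,t)\|_{L^2(\Omega)}\le \|2\,m\cdot\nabla u(\cdot,t)\|_{L^2(\Omega)}$. -/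
open MeasureTheory

open Set

noncomputable local instance EucOrder (n : ℕ) : PartialOrder (EuclideanSpace ℝ (Fin n)) :=
  PartialOrder.lift (fun x => (WithLp.ofLp x : Fin n → ℝ)) (WithLp.ofLp_injective 2)

lemma abs_coord_le {n : ℕ} (x : EuclideanSpace ℝ (Fin n)) (i : Fin n) : |x i| ≤ ‖x‖ := by
  rw [EuclideanSpace.norm_eq x, show |x i| = Real.sqrt (‖x i‖^2) by
    rw [Real.sqrt_sq_eq_abs, Real.norm_eq_abs, abs_abs]]
  exact Real.sqrt_le_sqrt <|
    Finset.single_le_sum (f := fun j => ‖x j‖^2) (fun j _ => sq_nonneg _) (Finset.mem_univ i)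

lemma key {m : ℕ} (g : EuclideanSpace ℝ (Fin (m+1)) → ℝ)
    (D : EuclideanSpace ℝ (Fin (m+1)) → (EuclideanSpace ℝ (Fin (m+1)) →L[ℝ] ℝ))
    (hd : ∀ x, HasFDerivAt g (D x) x) (hDc : Continuous D)
    (hsupp : HasCompactSupport g) (x₀ : EuclideanSpace ℝ (Fin (m+1))) :
    ∫ x, (D x (x - x₀) + ((m:ℝ)+1) * g x) = 0 := by
  classical
  have hgc : Continuous g := continuous_iff_continuousAt.2 fun x => (hd x).continuousAt
  obtain ⟨R₀, hR₀⟩ : ∃ r, tsupport g ⊆ Metric.closedBall 0 r :=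
    hsupp.isBounded.subset_closedBall 0
  set R := max R₀ 0 with hRdef
  have hRnn : (0:ℝ) ≤ R := le_max_right _ _
  have hR : tsupport g ⊆ Metric.closedBall 0 R :=
    hR₀.trans (Metric.closedBall_subset_closedBall (le_max_left _ _))
  have hmem : ∀ x : EuclideanSpace ℝ (Fin (m+1)), (∃ i, R < |x i|) → x ∉ tsupport g := by
    rintro x ⟨i, hi⟩ hx
    have := hR hx
    rw [Metric.mem_closedBall, dist_zero_right] at this
    exact absurd (hi.trans_le ((abs_coord_le x i).trans this)) (lt_irrefl _)
  have hg0 : ∀ x : EuclideanSpace ℝ (Fin (m+1)), x ∉ tsupport g → g x = 0 :=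
    fun x hx => image_eq_zero_of_notMem_tsupport hx
  have hD0 : ∀ x : EuclideanSpace ℝ (Fin (m+1)), x ∉ tsupport g → D x = 0 := by
    intro x hx
    have hopen : IsOpen (tsupport g)ᶜ := (isClosed_tsupport g).isOpen_compl
    have hev : g =ᶠ[nhds x] (fun _ => 0) := by
      filter_upwards [hopen.mem_nhds hx] with y hy
      exact image_eq_zero_of_notMem_tsupport hy
    exact (hd x).unique ((hasFDerivAt_const (0:ℝ) x).congr_of_eventuallyEq hev)
  -- setup for the divergence theorem
  let eL : EuclideanSpace ℝ (Fin (m+1)) ≃L[ℝ] (Fin (m+1) → ℝ) :=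
    EuclideanSpace.equiv (Fin (m+1)) ℝ
  let L : Fin (m+1) → (EuclideanSpace ℝ (Fin (m+1)) →L[ℝ] ℝ) := fun i =>
    (ContinuousLinearMap.proj i).comp (eL : EuclideanSpace ℝ (Fin (m+1)) →L[ℝ] (Fin (m+1) → ℝ))
  have hLapp : ∀ i (x : EuclideanSpace ℝ (Fin (m+1))), L i x = x i := fun _ _ => rfl
  let a : EuclideanSpace ℝ (Fin (m+1)) := WithLp.toLp 2 (fun _ => -(R+1))
  let b : EuclideanSpace ℝ (Fin (m+1)) := WithLp.toLp 2 (fun _ => (R+1))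
  have hle : a ≤ b := by
    show ∀ i, a i ≤ b i
    intro i; show -(R+1) ≤ R+1; linarith
  let f : Fin (m+1) → EuclideanSpace ℝ (Fin (m+1)) → ℝ := fun i x => g x * (x i - x₀ i)
  let f' : Fin (m+1) → EuclideanSpace ℝ (Fin (m+1)) →
      (EuclideanSpace ℝ (Fin (m+1)) →L[ℝ] ℝ) := fun i x =>
    g x • L i + (x i - x₀ i) • D x
  have hderiv : ∀ (x : EuclideanSpace ℝ (Fin (m+1))) (i : Fin (m+1)),
      HasFDerivAt (f i) (f' i x) x := by
    intro x i
    have h1 : HasFDerivAt (fun y : EuclideanSpace ℝ (Fin (m+1)) => y i - x₀ i) (L i) x := by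
      exact ((L i).hasFDerivAt (x := x)).sub_const (x₀ i)
    exact (hd x).mul h1
  have hDF : ∀ x : EuclideanSpace ℝ (Fin (m+1)), D x (x - x₀) + ((m:ℝ)+1) * g x
      = ∑ i, f' i x (eL.symm (Pi.single i 1)) := by
    intro x
    have hsum : ∀ (T : EuclideanSpace ℝ (Fin (m+1)) →L[ℝ] ℝ) (y : Fin (m+1) → ℝ),
        T (eL.symm y) = ∑ i, y i * T (eL.symm (Pi.single i 1)) := by
      intro T y
      have hy : y = ∑ i, y i • (Pi.single i (1:ℝ) : Fin (m+1) → ℝ) := by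
        ext j
        simp [Finset.sum_apply, Pi.single_apply, Finset.sum_ite_eq]
      calc T (eL.symm y) = T (eL.symm (∑ i, y i • (Pi.single i (1:ℝ) : Fin (m+1) → ℝ))) := by
            rw [← hy]
        _ = ∑ i, y i * T (eL.symm (Pi.single i 1)) := by
            rw [map_sum, map_sum]
            simp [smul_eq_mul]
    have hxx : x - x₀ = eL.symm (fun j => x j - x₀ j) := rfl
    calc D x (x - x₀) + ((m:ℝ)+1) * g x
        = (∑ i, (x i - x₀ i) * D x (eL.symm (Pi.single i 1))) + ∑ _i : Fin (m+1), g x := by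
          rw [hxx, hsum (D x) (fun j => x j - x₀ j)]
          congr 1
          rw [Finset.sum_const]
          simp [mul_comm]
      _ = ∑ i, f' i x (eL.symm (Pi.single i 1)) := by
          rw [← Finset.sum_add_distrib]
          congr 1; ext i
          have h1 : (L i) (eL.symm (Pi.single i 1)) = (1:ℝ) := by
            show (eL (eL.symm (Pi.single i 1))) i = 1
            rw [eL.apply_symm_apply]; simp
          simp only [f', ContinuousLinearMap.add_apply, ContinuousLinearMap.smul_apply,
            smul_eq_mul, h1, mul_one]
          ring
  set DF : EuclideanSpace ℝ (Fin (m+1)) → ℝ :=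
    fun x => D x (x - x₀) + ((m:ℝ)+1) * g x with hDFdef
  have hDFc : Continuous DF := by
    apply Continuous.add
    · exact hDc.clm_apply (continuous_id.sub continuous_const)
    · exact continuous_const.mul hgc
  have hDF0 : ∀ x, x ∉ tsupport g → DF x = 0 := by
    intro x hx
    simp [hDFdef, hD0 x hx, hg0 x hx]
  have hDFsupp : HasCompactSupport DF := HasCompactSupport.intro hsupp hDF0
  have hInt : Integrable DF := hDFc.integrable_of_hasCompactSupport hDFsupp
  have hdiv := integral_divergence_of_hasFDerivAt_off_countable_of_equiv eL
    (fun x y => Iff.rfl) (EuclideanSpace.volume_preserving_symm_measurableEquiv_toLp (Fin (m+1)))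
    f f' ∅ countable_empty a b hle
    (fun i => ((hgc.mul (((L i).continuous).sub continuous_const)).continuousOn))
    (fun x _ i => hderiv x i) DF hDF hInt.integrableOn
  -- faces vanish
  have hface : ∀ (i : Fin (m+1)) (c : ℝ), |c| = R + 1 →
      ∀ y : Fin m → ℝ, f i (eL.symm (i.insertNth c y)) = 0 := by
    intro i c hc y
    have : g (eL.symm (i.insertNth c y)) = 0 := by
      apply hg0
      apply hmem
      refine ⟨i, ?_⟩
      have hcoord : (eL.symm (i.insertNth c y) : EuclideanSpace ℝ (Fin (m+1))) i = c := by
        show (eL (eL.symm (i.insertNth c y))) i = c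
        rw [eL.apply_symm_apply]
        simp
      rw [hcoord, hc]; linarith
    simp [f, this]
  have hfaces : ∀ i : Fin (m+1),
      ((∫ x in Icc (eL a ∘ i.succAbove) (eL b ∘ i.succAbove),
          f i (eL.symm (i.insertNth (eL b i) x)) ) -
        ∫ x in Icc (eL a ∘ i.succAbove) (eL b ∘ i.succAbove),
          f i (eL.symm (i.insertNth (eL a i) x))) = 0 := by
    intro i
    have hb : (eL b i) = R + 1 := rfl
    have ha : (eL a i) = -(R + 1) := rfl
    rw [hb, ha]
    have h1 : ∀ y : Fin m → ℝ, f i (eL.symm (i.insertNth (R+1) y)) = 0 :=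
      hface i (R+1) (abs_of_nonneg (by linarith))
    have h2 : ∀ y : Fin m → ℝ, f i (eL.symm (i.insertNth (-(R+1)) y)) = 0 :=
      hface i (-(R+1)) (by rw [abs_neg, abs_of_nonneg]; linarith)
    simp only [h1, h2, integral_zero, sub_self]
  rw [Finset.sum_congr rfl (fun i _ => hfaces i), Finset.sum_const, smul_zero] at hdiv
  -- extend from the box to the whole space
  have hout : ∀ x : EuclideanSpace ℝ (Fin (m+1)), x ∉ Icc a b → DF x = 0 := by
    intro x hx
    apply hDF0
    apply hmem
    have hx' : ¬ (a ≤ x ∧ x ≤ b) := by rwa [← Set.mem_Icc]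
    rcases not_and_or.mp hx' with hax | hxb
    · have hax' : ¬ ∀ i, a i ≤ x i := hax
      obtain ⟨i, hi⟩ := not_forall.mp hax'
      have hi' : x i < -(R+1) := lt_of_not_ge fun hc => hi hc
      exact ⟨i, lt_of_lt_of_le (by linarith only [hi', hRnn]) (neg_le_abs _)⟩
    · have hxb' : ¬ ∀ i, x i ≤ b i := hxb
      obtain ⟨i, hi⟩ := not_forall.mp hxb'
      have hi' : (R+1) < x i := lt_of_not_ge fun hc => hi hc
      exact ⟨i, lt_of_lt_of_le (by linarith only [hi', hRnn]) (le_abs_self _)⟩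
  rw [setIntegral_eq_integral_of_forall_compl_eq_zero hout] at hdiv
  exact hdiv

set_option maxHeartbeats 1000000 in
/-- Multiplier bound: for `u` vanishing on `∂Ω`, the multiplier
`w = 2 m·∇u + (n-1)u` with `m(x) = x - x₀` satisfies `‖w‖_{L²(Ω)} ≤ ‖2 m·∇u‖_{L²(Ω)}`. -/
theorem stmt11 (n : ℕ) (hn : 1 ≤ n) (Ω : Set (EuclideanSpace ℝ (Fin n)))
    (hΩo : IsOpen Ω) (hΩb : Bornology.IsBounded Ω) (x₀ : EuclideanSpace ℝ (Fin n))
    (u : EuclideanSpace ℝ (Fin n) → ℝ) (hu : ContDiff ℝ 1 u)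
    (hbd : ∀ x ∈ frontier Ω, u x = 0)
    (hint1 : IntegrableOn (fun x => u x ^ 2) Ω)
    (hint2 : IntegrableOn
      (fun x => (inner ℝ (x - x₀) (gradient u x) : ℝ) ^ 2) Ω) :
    Real.sqrt (∫ x in Ω,
        (2 * (inner ℝ (x - x₀) (gradient u x) : ℝ) + ((n : ℝ) - 1) * u x) ^ 2) ≤
      Real.sqrt (∫ x in Ω, (2 * (inner ℝ (x - x₀) (gradient u x) : ℝ)) ^ 2) := by
  obtain ⟨k, rfl⟩ : ∃ k, n = k + 1 := ⟨n - 1, (Nat.succ_pred_eq_of_pos hn).symm⟩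
  set M : EuclideanSpace ℝ (Fin (k+1)) → ℝ :=
    fun x => (inner ℝ (x - x₀) (gradient u x) : ℝ) with hMdef
  have hdu : ∀ x, HasFDerivAt u (fderiv ℝ u x) x :=
    fun x => (hu.differentiable one_ne_zero x).hasFDerivAt
  have husq : ∀ x, HasFDerivAt (fun y => u y ^ 2) ((2 * u x) • fderiv ℝ u x) x := by
    intro x
    have h2 : HasFDerivAt (fun y => u y * u y)
        (u x • fderiv ℝ u x + u x • fderiv ℝ u x) x := (hdu x).mul (hdu x)
    have h3 : (2 * u x) • fderiv ℝ u x = u x • fderiv ℝ u x + u x • fderiv ℝ u x := by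
      rw [two_mul, add_smul]
    rw [h3]
    simpa only [pow_two] using h2
  set g : EuclideanSpace ℝ (Fin (k+1)) → ℝ := Ω.indicator (fun x => u x ^ 2) with hgdef
  set D : EuclideanSpace ℝ (Fin (k+1)) → (EuclideanSpace ℝ (Fin (k+1)) →L[ℝ] ℝ) :=
    Ω.indicator (fun x => (2 * u x) • fderiv ℝ u x) with hDdef
  have hd : ∀ x, HasFDerivAt g (D x) x := by
    intro x
    by_cases hx : x ∈ Ω
    · rw [hDdef]
      simp only [Set.indicator_of_mem hx]
      refine (husq x).congr_of_eventuallyEq ?_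
      filter_upwards [hΩo.mem_nhds hx] with y hy
      exact Set.indicator_of_mem hy _
    · have hDx : D x = 0 := Set.indicator_of_notMem hx _
      rw [hDx]
      by_cases hcl : x ∈ closure Ω
      · have hfr : x ∈ frontier Ω := by
          rw [frontier, hΩo.interior_eq]; exact ⟨hcl, hx⟩
        have hux : u x = 0 := hbd x hfr
        have husq0 : HasFDerivAt (fun y => u y ^ 2) (0 : _ →L[ℝ] ℝ) x := by
          have := husq x
          rwa [hux, mul_zero, zero_smul] at this
        rw [hasFDerivAt_iff_isLittleO_nhds_zero] at husq0 ⊢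
        refine Asymptotics.IsBigO.trans_isLittleO
          (Asymptotics.isBigO_of_le _ fun h => ?_) husq0
        have hgx : g x = 0 := Set.indicator_of_notMem hx _
        simp only [ContinuousLinearMap.zero_apply, sub_zero, hgx, hux]
        rw [hgdef]
        by_cases hy : x + h ∈ Ω
        · simp [Set.indicator_of_mem hy]
        · simp [Set.indicator_of_notMem hy, sq_nonneg]
      · refine (hasFDerivAt_const (0:ℝ) x).congr_of_eventuallyEq ?_
        filter_upwards [isClosed_closure.isOpen_compl.mem_nhds hcl] with y hy
        exact Set.indicator_of_notMem (fun hmem => hy (subset_closure hmem)) _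
  have hsm : Continuous (fun y => (2 * u y) • fderiv ℝ u y) :=
    (continuous_const.mul hu.continuous).smul (hu.continuous_fderiv one_ne_zero)
  have hDc : Continuous D := by
    rw [continuous_iff_continuousAt]
    intro x
    by_cases hx : x ∈ Ω
    · refine hsm.continuousAt.congr ?_
      filter_upwards [hΩo.mem_nhds hx] with y hy
      exact (Set.indicator_of_mem hy (fun z => (2 * u z) • fderiv ℝ u z)).symm
    · have hDx : D x = 0 := Set.indicator_of_notMem hx _
      by_cases hcl : x ∈ closure Ω
      · have hux : u x = 0 := hbd x (by rw [frontier, hΩo.interior_eq]; exact ⟨hcl, hx⟩)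
        have : Filter.Tendsto D (nhds x) (nhds 0) := by
          apply squeeze_zero_norm (a := fun y => ‖(2 * u y) • fderiv ℝ u y‖)
          · intro y
            rw [hDdef]
            by_cases hy : y ∈ Ω
            · simp [Set.indicator_of_mem hy]
            · simp [Set.indicator_of_notMem hy]
          · have := (hsm.norm).continuousAt (x := x)
            rw [ContinuousAt] at this
            simpa [hux] using this
        rw [ContinuousAt, hDx]
        exact this
      · refine (continuousAt_const
            (y := (0 : EuclideanSpace ℝ (Fin (k+1)) →L[ℝ] ℝ))).congr ?_
        filter_upwards [isClosed_closure.isOpen_compl.mem_nhds hcl] with y hy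
        exact (Set.indicator_of_notMem (fun hmem => hy (subset_closure hmem))
          (fun z => (2 * u z) • fderiv ℝ u z)).symm
  have hclcomp : IsCompact (closure Ω) :=
    Metric.isCompact_of_isClosed_isBounded isClosed_closure hΩb.closure
  have hsupp : HasCompactSupport g :=
    HasCompactSupport.intro hclcomp
      (fun x hx => Set.indicator_of_notMem (fun hmem => hx (subset_closure hmem)) _)
  have hkey := key g D hd hDc hsupp x₀
  -- rewrite the integrand as an indicator
  have hgradapp : ∀ x v, (inner ℝ (gradient u x) v : ℝ) = fderiv ℝ u x v := by
    intro x v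
    exact InnerProductSpace.toDual_symm_apply
  have heq : (fun x => D x (x - x₀) + ((k:ℝ)+1) * g x)
      = Ω.indicator (fun x => 2 * (u x * M x) + ((k:ℝ)+1) * u x ^ 2) := by
    funext x
    by_cases hx : x ∈ Ω
    · rw [Set.indicator_of_mem hx, hgdef, hDdef]
      simp only [Set.indicator_of_mem hx]
      rw [ContinuousLinearMap.smul_apply, smul_eq_mul]
      have : M x = fderiv ℝ u x (x - x₀) := by
        rw [hMdef]
        dsimp only
        rw [real_inner_comm]
        exact hgradapp x (x - x₀)
      rw [this]
      ring
    · rw [Set.indicator_of_notMem hx, hgdef, hDdef]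
      simp only [Set.indicator_of_notMem hx]
      simp
  rw [heq, integral_indicator hΩo.measurableSet] at hkey
  -- integrability of u * M
  have hgradc : Continuous (fun x => gradient u x) := by
    have : (fun x => gradient u x)
        = fun x => (InnerProductSpace.toDual ℝ _).symm (fderiv ℝ u x) := rfl
    rw [this]
    exact (InnerProductSpace.toDual ℝ _).symm.continuous.comp (hu.continuous_fderiv one_ne_zero)
  have hMc : Continuous M := (continuous_id.sub continuous_const).inner hgradc
  have hMint : IntegrableOn (fun x => u x * M x) Ω := by
    have hsum : IntegrableOn (fun x => u x ^ 2 + M x ^ 2) Ω := hint1.add hint2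
    refine Integrable.mono' hsum ?_ ?_
    · exact (hu.continuous.mul hMc).aestronglyMeasurable
    · refine Filter.Eventually.of_forall fun x => ?_
      have h1 : ‖u x * M x‖ = |u x| * |M x| := abs_mul _ _
      rw [h1]
      have h2 := two_mul_le_add_sq (|u x|) (|M x|)
      rw [sq_abs, sq_abs] at h2
      have h3 : (0:ℝ) ≤ u x ^ 2 := sq_nonneg _
      have h4 : (0:ℝ) ≤ M x ^ 2 := sq_nonneg _
      have h5 : (0:ℝ) ≤ |u x| * |M x| := mul_nonneg (abs_nonneg _) (abs_nonneg _)
      linarith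
  -- split the integral
  have hsplit : (∫ x in Ω, (2 * (u x * M x) + ((k:ℝ)+1) * u x ^ 2))
      = 2 * (∫ x in Ω, u x * M x) + ((k:ℝ)+1) * ∫ x in Ω, u x ^ 2 := by
    have hA : IntegrableOn (fun x => 2 * (u x * M x)) Ω := hMint.const_mul 2
    have hB : IntegrableOn (fun x => ((k:ℝ)+1) * u x ^ 2) Ω := hint1.const_mul _
    rw [integral_add hA hB, integral_const_mul, integral_const_mul]
  rw [hsplit] at hkey
  set IM := ∫ x in Ω, u x * M x
  set I2 := ∫ x in Ω, u x ^ 2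
  have hI2 : 0 ≤ I2 := setIntegral_nonneg hΩo.measurableSet fun x _ => sq_nonneg _
  -- final comparison
  apply Real.sqrt_le_sqrt
  have hcast : ((k + 1 : ℕ) : ℝ) - 1 = (k : ℝ) := by push_cast; ring
  rw [hcast]
  have hexp : ∀ x : EuclideanSpace ℝ (Fin (k+1)),
      (2 * M x + (k:ℝ) * u x) ^ 2
        = (2 * M x) ^ 2 + ((4 * (k:ℝ)) * (u x * M x) + (k:ℝ)^2 * u x ^ 2) := by
    intro x; ring
  have hintA : IntegrableOn (fun x => (2 * M x) ^ 2) Ω := by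
    refine (hint2.const_mul 4).congr ?_
    refine Filter.Eventually.of_forall fun x => ?_
    dsimp only
    ring
  have hBsplit : (∫ x in Ω, (2 * M x + (k:ℝ) * u x) ^ 2)
      = (∫ x in Ω, (2 * M x) ^ 2)
        + ((4 * (k:ℝ)) * IM + (k:ℝ)^2 * I2) := by
    calc (∫ x in Ω, (2 * M x + (k:ℝ) * u x) ^ 2)
        = ∫ x in Ω, ((2 * M x) ^ 2 + ((4 * (k:ℝ)) * (u x * M x) + (k:ℝ)^2 * u x ^ 2)) := by
          refine integral_congr_ae (Filter.Eventually.of_forall fun x => hexp x)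
      _ = (∫ x in Ω, (2 * M x) ^ 2)
            + ((4 * (k:ℝ)) * IM + (k:ℝ)^2 * I2) := by
          have hC : IntegrableOn (fun x => (4 * (k:ℝ)) * (u x * M x)) Ω := hMint.const_mul _
          have hD' : IntegrableOn (fun x => (k:ℝ)^2 * u x ^ 2) Ω := hint1.const_mul _
          have hCD : IntegrableOn
              (fun x => (4 * (k:ℝ)) * (u x * M x) + (k:ℝ)^2 * u x ^ 2) Ω := hC.add hD'
          rw [integral_add hintA hCD, integral_add hC hD', integral_const_mul, integral_const_mul]
  rw [hBsplit]
  have hk0 : (0:ℝ) ≤ (k:ℝ) := Nat.cast_nonneg k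
  nlinarith [hkey, hI2, hk0]
end
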